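/- Let Q and Q̂ be two quadrilaterals in ℝ² whose vertices are obtained from the vertices of a dyadic square of side 2^{-k} and from the vertices of its four dyadic children respectively, each vertex v shifted diagonally so that both coordinates of v − ṽ lie in the interval [2^{-k}/10 − 2^{-k}/40, 2^{-k}/10] (for generation k) and in [2^{-(k+1)}/10 − 2^{-(k+1)}/40, 2^{-(k+1)}/10] (for generation k+1). Then each side of ∂Q has distance at least 2^{-k}/40 from the corresponding side of ∂Q̂, and the boundaries ∂Q and ∂Q̂ intersect in exactly two points. -/

import Mathlib

open Set
open Fin.NatCast

noncomputable section

namespace S18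
def cross (a b : ℝ × ℝ) : ℝ := a.1 * b.2 - a.2 * b.1

lemma fin4_cases (i : Fin 4) : i = 0 ∨ i = 1 ∨ i = 2 ∨ i = 3 := by
  revert i; decide

lemma fin8_cases (i : Fin 8) :
    i = 0 ∨ i = 1 ∨ i = 2 ∨ i = 3 ∨ i = 4 ∨ i = 5 ∨ i = 6 ∨ i = 7 := by
  revert i; decide

lemma seg_param {p q x : ℝ × ℝ} (h : x ∈ segment ℝ p q) :
    ∃ t : ℝ, 0 ≤ t ∧ t ≤ 1 ∧ x = p + t • (q - p) := by
  rcases h with ⟨a, b, ha, hb, hab, rfl⟩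
  refine ⟨b, hb, by linarith, ?_⟩
  have : a = 1 - b := by linarith
  subst this
  ext <;> simp <;> ring

lemma param_seg {p q : ℝ × ℝ} {t : ℝ} (h0 : 0 ≤ t) (h1 : t ≤ 1) :
    p + t • (q - p) ∈ segment ℝ p q := by
  refine ⟨1 - t, t, by linarith, h0, by ring, ?_⟩
  ext <;> simp <;> ring

lemma le_fst_of_seg {p q x : ℝ × ℝ} (h : x ∈ segment ℝ p q) {c : ℝ}
    (hp : c ≤ p.1) (hq : c ≤ q.1) : c ≤ x.1 := by
  obtain ⟨t, ht0, ht1, rfl⟩ := seg_param h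
  simp only [Prod.fst_add, Prod.smul_fst, Prod.fst_sub, smul_eq_mul]
  nlinarith

lemma fst_le_of_seg {p q x : ℝ × ℝ} (h : x ∈ segment ℝ p q) {c : ℝ}
    (hp : p.1 ≤ c) (hq : q.1 ≤ c) : x.1 ≤ c := by
  obtain ⟨t, ht0, ht1, rfl⟩ := seg_param h
  simp only [Prod.fst_add, Prod.smul_fst, Prod.fst_sub, smul_eq_mul]
  nlinarith

lemma le_snd_of_seg {p q x : ℝ × ℝ} (h : x ∈ segment ℝ p q) {c : ℝ}
    (hp : c ≤ p.2) (hq : c ≤ q.2) : c ≤ x.2 := by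
  obtain ⟨t, ht0, ht1, rfl⟩ := seg_param h
  simp only [Prod.snd_add, Prod.smul_snd, Prod.snd_sub, smul_eq_mul]
  nlinarith

lemma snd_le_of_seg {p q x : ℝ × ℝ} (h : x ∈ segment ℝ p q) {c : ℝ}
    (hp : p.2 ≤ c) (hq : q.2 ≤ c) : x.2 ≤ c := by
  obtain ⟨t, ht0, ht1, rfl⟩ := seg_param h
  simp only [Prod.snd_add, Prod.smul_snd, Prod.snd_sub, smul_eq_mul]
  nlinarith

lemma inter_unique {p q r s x y : ℝ × ℝ}
    (hC : cross (q - p) (s - r) ≠ 0)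
    (hx : x ∈ segment ℝ p q) (hx' : x ∈ segment ℝ r s)
    (hy : y ∈ segment ℝ p q) (hy' : y ∈ segment ℝ r s) : x = y := by
  obtain ⟨t, _, _, hxt⟩ := seg_param hx
  obtain ⟨u, _, _, hxu⟩ := seg_param hx'
  obtain ⟨t', _, _, hyt⟩ := seg_param hy
  obtain ⟨u', _, _, hyu⟩ := seg_param hy'
  have h1 : (t - t') * (q - p).1 = (u - u') * (s - r).1 := by
    have := congrArg Prod.fst (hxt.symm.trans hxu)
    have := congrArg Prod.fst (hyt.symm.trans hyu)
    simp only [Prod.fst_add, Prod.smul_fst, Prod.fst_sub, smul_eq_mul] at *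
    linarith
  have h2 : (t - t') * (q - p).2 = (u - u') * (s - r).2 := by
    have := congrArg Prod.snd (hxt.symm.trans hxu)
    have := congrArg Prod.snd (hyt.symm.trans hyu)
    simp only [Prod.snd_add, Prod.smul_snd, Prod.snd_sub, smul_eq_mul] at *
    linarith
  have ht : t = t' := by
    rcases eq_or_ne t t' with h | h
    · exact h
    · exfalso
      apply hC
      unfold cross
      have h3 : (t - t') * ((q - p).1 * (s - r).2 - (q - p).2 * (s - r).1) = 0 := by
        linear_combination (s - r).2 * h1 - (s - r).1 * h2
      have : (q - p).1 * (s - r).2 - (q - p).2 * (s - r).1 = 0 := by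
        have := sub_ne_zero.2 h
        exact (mul_eq_zero.1 h3).resolve_left this
      linarith
  rw [hxt, hyt, ht]

lemma inter_exists {p q r s : ℝ × ℝ}
    (h0 : cross (p - r) (s - r) < 0) (h1 : 0 < cross (q - r) (s - r))
    (hrp : r.2 < p.2) (hrq : r.2 < q.2) (hps : p.2 < s.2) (hqs : q.2 < s.2) :
    ∃ S, S ∈ segment ℝ p q ∧ S ∈ segment ℝ r s := by
  have hCid : cross (q - p) (s - r) = cross (q - r) (s - r) - cross (p - r) (s - r) := by
    unfold cross; simp only [Prod.fst_sub, Prod.snd_sub]; ring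
  have hC : 0 < cross (q - p) (s - r) := by rw [hCid]; linarith
  set C := cross (q - p) (s - r) with hCdef
  set t := -cross (p - r) (s - r) / C with htdef
  have ht0 : 0 ≤ t := div_nonneg (by linarith) hC.le
  have ht1 : t ≤ 1 := by
    rw [htdef, div_le_one hC]; rw [hCid]; linarith
  set S := p + t • (q - p) with hSdef
  have hSpq : S ∈ segment ℝ p q := param_seg ht0 ht1
  have hScross : (S.1 - r.1) * (s.2 - r.2) - (S.2 - r.2) * (s.1 - r.1) = 0 := by
    have hC' : C ≠ 0 := ne_of_gt hC
    rw [hSdef]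
    unfold cross at *
    simp only [Prod.fst_sub, Prod.snd_sub, Prod.fst_add, Prod.snd_add, Prod.smul_fst,
      Prod.smul_snd, smul_eq_mul] at *
    rw [htdef]
    field_simp
    ring_nf
    ring_nf at hCdef
    nlinarith [hCdef]
  have h2y : r.2 < S.2 :=
    lt_of_lt_of_le (lt_min hrp hrq)
      (le_snd_of_seg hSpq (min_le_left _ _) (min_le_right _ _))
  have h2y' : S.2 < s.2 :=
    lt_of_le_of_lt (snd_le_of_seg hSpq (le_max_left _ _) (le_max_right _ _)) (max_lt hps hqs)
  have hd : 0 < s.2 - r.2 := by linarith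
  set u := (S.2 - r.2) / (s.2 - r.2) with hu
  have hu0 : 0 ≤ u := div_nonneg (by linarith) hd.le
  have hu1 : u ≤ 1 := by rw [hu, div_le_one hd]; linarith
  refine ⟨S, hSpq, ?_⟩
  have hrep : S = r + u • (s - r) := by
    have h1' : S.1 = r.1 + u * (s.1 - r.1) := by
      rw [hu]
      field_simp
      linear_combination hScross
    have h2' : S.2 = r.2 + u * (s.2 - r.2) := by
      rw [hu]; field_simp; ring
    ext
    · simpa using h1'
    · simpa using h2'
  rw [hrep]; exact param_seg hu0 hu1


set_option maxHeartbeats 1000000 in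
lemma key_pair {δ W1 W2 a0 b0 a1 b1 c2 d2 c3 d3 : ℝ} (hδ : 0 < δ)
    (ha0l : 3*δ/40 ≤ a0) (ha0u : a0 ≤ δ/10)
    (hb0l : 3*δ/40 ≤ b0) (hb0u : b0 ≤ δ/10)
    (ha1l : 3*δ/40 ≤ a1) (ha1u : a1 ≤ δ/10)
    (hb1l : 3*δ/40 ≤ b1) (hb1u : b1 ≤ δ/10)
    (hc2l : 3*δ/80 ≤ c2) (hc2u : c2 ≤ δ/20)
    (hd2l : 3*δ/80 ≤ d2) (hd2u : d2 ≤ δ/20)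
    (hc3l : 3*δ/80 ≤ c3) (hc3u : c3 ≤ δ/20)
    (hd3l : 3*δ/80 ≤ d3) (hd3u : d3 ≤ δ/20) :
    0 < cross (((W1+δ+a1, W2+b1) : ℝ×ℝ) - (W1+a0, W2+b0))
        (((W1+δ+c3, W2+δ/2+d3) : ℝ×ℝ) - (W1+δ+c2, W2+d2)) ∧
    ∃ S, S ∈ segment ℝ ((W1+a0, W2+b0) : ℝ×ℝ) ((W1+δ+a1, W2+b1) : ℝ×ℝ) ∧
      S ∈ segment ℝ ((W1+δ+c2, W2+d2) : ℝ×ℝ) ((W1+δ+c3, W2+δ/2+d3) : ℝ×ℝ) := by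
  have hδ2 : 0 < δ * δ := mul_pos hδ hδ
  have hc32 : |c3 - c2| ≤ δ/80 := abs_le.2 ⟨by linarith, by linarith⟩
  have hB : 39*δ/80 ≤ W2 + δ/2 + d3 - (W2 + d2) := by linarith
  constructor
  · unfold cross
    simp only [Prod.fst_sub, Prod.snd_sub]
    have hA : 39*δ/40 ≤ W1 + δ + a1 - (W1 + a0) := by linarith
    have hP : 39*δ/40 * (39*δ/80) ≤ (W1 + δ + a1 - (W1 + a0)) * (W2 + δ/2 + d3 - (W2 + d2)) :=
      mul_le_mul hA hB (by linarith) (by linarith)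
    have hbc : (W2 + b1 - (W2 + b0)) * (c3 - c2) ≤ δ/40 * (δ/80) := by
      calc (W2 + b1 - (W2 + b0)) * (c3 - c2) ≤ |(W2 + b1 - (W2 + b0)) * (c3 - c2)| :=
            le_abs_self _
        _ = |W2 + b1 - (W2 + b0)| * |c3 - c2| := abs_mul _ _
        _ ≤ δ/40 * (δ/80) :=
            mul_le_mul (abs_le.2 ⟨by linarith, by linarith⟩) hc32 (abs_nonneg _) (by linarith)
    linarith [hP, hbc, hδ2]
  · apply inter_exists
    · unfold cross
      simp only [Prod.fst_sub, Prod.snd_sub]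
      have hA : W1 + a0 - (W1 + δ + c2) ≤ -(15*δ/16) := by linarith
      have hA0 : W1 + a0 - (W1 + δ + c2) ≤ 0 := by linarith
      have hP : (W1 + a0 - (W1 + δ + c2)) * (W2 + δ/2 + d3 - (W2 + d2)) ≤
          -(15*δ/16) * (39*δ/80) := by
        calc (W1 + a0 - (W1 + δ + c2)) * (W2 + δ/2 + d3 - (W2 + d2))
            ≤ (W1 + a0 - (W1 + δ + c2)) * (39*δ/80) := mul_le_mul_of_nonpos_left hB hA0
          _ ≤ -(15*δ/16) * (39*δ/80) := mul_le_mul_of_nonneg_right hA (by linarith)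
      have hbc0 : -(δ/16 * (δ/80)) ≤ (W2 + b0 - (W2 + d2)) * (c3 - c2) := by
        have h3 : |(W2 + b0 - (W2 + d2)) * (c3 - c2)| ≤ δ/16 * (δ/80) := by
          rw [abs_mul]
          exact mul_le_mul (abs_le.2 ⟨by linarith, by linarith⟩) hc32 (abs_nonneg _)
            (by linarith)
        linarith [neg_abs_le ((W2 + b0 - (W2 + d2)) * (c3 - c2))]
      linarith [hP, hbc0, hδ2]
    · unfold cross
      simp only [Prod.fst_sub, Prod.snd_sub]
      have hA : δ/40 ≤ W1 + δ + a1 - (W1 + δ + c2) := by linarith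
      have hP : δ/40 * (39*δ/80) ≤ (W1 + δ + a1 - (W1 + δ + c2)) * (W2 + δ/2 + d3 - (W2 + d2)) :=
        mul_le_mul hA hB (by linarith) (by linarith)
      have hbc1 : (W2 + b1 - (W2 + d2)) * (c3 - c2) ≤ δ/16 * (δ/80) := by
        calc (W2 + b1 - (W2 + d2)) * (c3 - c2) ≤ |(W2 + b1 - (W2 + d2)) * (c3 - c2)| :=
              le_abs_self _
          _ = |W2 + b1 - (W2 + d2)| * |c3 - c2| := abs_mul _ _
          _ ≤ δ/16 * (δ/80) :=
              mul_le_mul (abs_le.2 ⟨by linarith, by linarith⟩) hc32 (abs_nonneg _) (by linarith)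
      linarith [hP, hbc1, hδ2]
    · show W2 + d2 < W2 + b0
      linarith
    · show W2 + d2 < W2 + b1
      linarith
    · show W2 + b0 < W2 + δ/2 + d3
      linarith
    · show W2 + b1 < W2 + δ/2 + d3
      linarith


lemma seg_swap {x : ℝ × ℝ} {a b c d : ℝ}
    (h : x ∈ segment ℝ ((a, b) : ℝ × ℝ) ((c, d) : ℝ × ℝ)) :
    ((x.2, x.1) : ℝ × ℝ) ∈ segment ℝ ((b, a) : ℝ × ℝ) ((d, c) : ℝ × ℝ) := by
  obtain ⟨α, β, hα, hβ, hαβ, rfl⟩ := h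
  exact ⟨α, β, hα, hβ, hαβ, by ext <;> dsimp <;> ring⟩

lemma snd_dist {x y : ℝ × ℝ} {c : ℝ} (h : c ≤ x.2 - y.2) : c ≤ dist x y := by
  have h1 : c ≤ |x.2 - y.2| := le_trans h (le_abs_self _)
  rw [← Real.dist_eq] at h1
  exact le_trans h1 (by rw [Prod.dist_eq]; exact le_max_right _ _)

lemma fst_dist {x y : ℝ × ℝ} {c : ℝ} (h : c ≤ x.1 - y.1) : c ≤ dist x y := by
  have h1 : c ≤ |x.1 - y.1| := le_trans h (le_abs_self _)
  rw [← Real.dist_eq] at h1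
  exact le_trans h1 (by rw [Prod.dist_eq]; exact le_max_left _ _)

end S18

open S18

set_option maxHeartbeats 4000000 in
theorem stmt_18 (k : ℕ) (w : ℝ × ℝ) (σ : Fin 4 → ℝ × ℝ) (τ : Fin 8 → ℝ × ℝ)
    (hσ : ∀ i, (σ i).1 ∈ Icc ((2:ℝ)^(-(k:ℝ))/10 - (2:ℝ)^(-(k:ℝ))/40) ((2:ℝ)^(-(k:ℝ))/10) ∧
      (σ i).2 ∈ Icc ((2:ℝ)^(-(k:ℝ))/10 - (2:ℝ)^(-(k:ℝ))/40) ((2:ℝ)^(-(k:ℝ))/10))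
    (hτ : ∀ i, (τ i).1 ∈ Icc ((2:ℝ)^(-((k:ℝ)+1))/10 - (2:ℝ)^(-((k:ℝ)+1))/40)
        ((2:ℝ)^(-((k:ℝ)+1))/10) ∧
      (τ i).2 ∈ Icc ((2:ℝ)^(-((k:ℝ)+1))/10 - (2:ℝ)^(-((k:ℝ)+1))/40) ((2:ℝ)^(-((k:ℝ)+1))/10))
    (v : Fin 4 → ℝ × ℝ)
    (hv : v = fun i =>
      (![w, w + ((2:ℝ)^(-(k:ℝ)), 0), w + ((2:ℝ)^(-(k:ℝ)), (2:ℝ)^(-(k:ℝ))),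
        w + (0, (2:ℝ)^(-(k:ℝ)))] : Fin 4 → ℝ × ℝ) i + σ i)
    (vhat : Fin 8 → ℝ × ℝ)
    (hvhat : vhat = fun i =>
      (![w, w + ((2:ℝ)^(-(k:ℝ))/2, 0), w + ((2:ℝ)^(-(k:ℝ)), 0),
        w + ((2:ℝ)^(-(k:ℝ)), (2:ℝ)^(-(k:ℝ))/2), w + ((2:ℝ)^(-(k:ℝ)), (2:ℝ)^(-(k:ℝ))),
        w + ((2:ℝ)^(-(k:ℝ))/2, (2:ℝ)^(-(k:ℝ))), w + (0, (2:ℝ)^(-(k:ℝ))),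
        w + (0, (2:ℝ)^(-(k:ℝ))/2)] : Fin 8 → ℝ × ℝ) i + τ i) :
    (∀ i : Fin 4, ∀ x ∈ segment ℝ (v i) (v (i + 1)),
      ∀ y ∈ segment ℝ (vhat ((2 * (i : ℕ) : ℕ) : Fin 8)) (vhat ((2 * (i : ℕ) : ℕ) + 1 : Fin 8)) ∪
          segment ℝ (vhat ((2 * (i : ℕ) : ℕ) + 1 : Fin 8)) (vhat ((2 * (i : ℕ) : ℕ) + 2 : Fin 8)),
        (2:ℝ)^(-(k:ℝ))/40 ≤ dist x y) ∧
    ∃ S T : ℝ × ℝ, S ≠ T ∧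
      (⋃ i : Fin 4, segment ℝ (v i) (v (i + 1))) ∩
        (⋃ i : Fin 8, segment ℝ (vhat i) (vhat (i + 1))) = {S, T} := by
  set δ := (2:ℝ)^(-(k:ℝ)) with hδdef
  have hδ : 0 < δ := Real.rpow_pos_of_pos (by norm_num) _
  have hhalf : (2:ℝ)^(-((k:ℝ)+1)) = δ/2 := by
    have h1 : -((k:ℝ)+1) = (-(k:ℝ)) + (-1) := by ring
    rw [h1, Real.rpow_add (by norm_num : (0:ℝ) < 2), Real.rpow_neg_one, hδdef]
    ring
  have hσ' : ∀ i, 3*δ/40 ≤ (σ i).1 ∧ (σ i).1 ≤ δ/10 ∧ 3*δ/40 ≤ (σ i).2 ∧ (σ i).2 ≤ δ/10 := by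
    intro i
    obtain ⟨⟨h1, h2⟩, h3, h4⟩ := hσ i
    exact ⟨by linarith, h2, by linarith, h4⟩
  have hτ' : ∀ i, 3*δ/80 ≤ (τ i).1 ∧ (τ i).1 ≤ δ/20 ∧ 3*δ/80 ≤ (τ i).2 ∧ (τ i).2 ≤ δ/20 := by
    intro i
    obtain ⟨⟨h1, h2⟩, h3, h4⟩ := hτ i
    rw [hhalf] at h1 h2 h3 h4
    exact ⟨by linarith, by linarith, by linarith, by linarith⟩
  obtain ⟨s0a, s0b, s0c, s0d⟩ := hσ' 0
  obtain ⟨s1a, s1b, s1c, s1d⟩ := hσ' 1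
  obtain ⟨s2a, s2b, s2c, s2d⟩ := hσ' 2
  obtain ⟨s3a, s3b, s3c, s3d⟩ := hσ' 3
  obtain ⟨t0a, t0b, t0c, t0d⟩ := hτ' 0
  obtain ⟨t1a, t1b, t1c, t1d⟩ := hτ' 1
  obtain ⟨t2a, t2b, t2c, t2d⟩ := hτ' 2
  obtain ⟨t3a, t3b, t3c, t3d⟩ := hτ' 3
  obtain ⟨t4a, t4b, t4c, t4d⟩ := hτ' 4
  obtain ⟨t5a, t5b, t5c, t5d⟩ := hτ' 5
  obtain ⟨t6a, t6b, t6c, t6d⟩ := hτ' 6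
  obtain ⟨t7a, t7b, t7c, t7d⟩ := hτ' 7
  have hv0 : v 0 = (w.1 + (σ 0).1, w.2 + (σ 0).2) := by
    rw [hv]; show w + σ 0 = _; ext <;> dsimp <;> ring
  have hv1 : v 1 = (w.1 + δ + (σ 1).1, w.2 + (σ 1).2) := by
    rw [hv]; show w + (δ, 0) + σ 1 = _; ext <;> dsimp <;> ring
  have hv2 : v 2 = (w.1 + δ + (σ 2).1, w.2 + δ + (σ 2).2) := by
    rw [hv]; show w + (δ, δ) + σ 2 = _; ext <;> dsimp <;> ring
  have hv3 : v 3 = (w.1 + (σ 3).1, w.2 + δ + (σ 3).2) := by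
    rw [hv]; show w + (0, δ) + σ 3 = _; ext <;> dsimp <;> ring
  have hu0 : vhat 0 = (w.1 + (τ 0).1, w.2 + (τ 0).2) := by
    rw [hvhat]; show w + τ 0 = _; ext <;> dsimp <;> ring
  have hu1 : vhat 1 = (w.1 + δ/2 + (τ 1).1, w.2 + (τ 1).2) := by
    rw [hvhat]; show w + (δ/2, 0) + τ 1 = _; ext <;> dsimp <;> ring
  have hu2 : vhat 2 = (w.1 + δ + (τ 2).1, w.2 + (τ 2).2) := by
    rw [hvhat]; show w + (δ, 0) + τ 2 = _; ext <;> dsimp <;> ring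
  have hu3 : vhat 3 = (w.1 + δ + (τ 3).1, w.2 + δ/2 + (τ 3).2) := by
    rw [hvhat]; show w + (δ, δ/2) + τ 3 = _; ext <;> dsimp <;> ring
  have hu4 : vhat 4 = (w.1 + δ + (τ 4).1, w.2 + δ + (τ 4).2) := by
    rw [hvhat]; show w + (δ, δ) + τ 4 = _; ext <;> dsimp <;> ring
  have hu5 : vhat 5 = (w.1 + δ/2 + (τ 5).1, w.2 + δ + (τ 5).2) := by
    rw [hvhat]; show w + (δ/2, δ) + τ 5 = _; ext <;> dsimp <;> ring
  have hu6 : vhat 6 = (w.1 + (τ 6).1, w.2 + δ + (τ 6).2) := by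
    rw [hvhat]; show w + (0, δ) + τ 6 = _; ext <;> dsimp <;> ring
  have hu7 : vhat 7 = (w.1 + (τ 7).1, w.2 + δ/2 + (τ 7).2) := by
    rw [hvhat]; show w + (0, δ/2) + τ 7 = _; ext <;> dsimp <;> ring
  clear hσ hτ hσ' hτ' hv hvhat hδdef hhalf
  -- edge coordinate ranges
  have hE0 : ∀ z ∈ segment ℝ (v 0) (v 1), w.1 + 3*δ/40 ≤ z.1 ∧ z.1 ≤ w.1 + δ + δ/10 ∧
      w.2 + 3*δ/40 ≤ z.2 ∧ z.2 ≤ w.2 + δ/10 := by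
    intro z hz
    refine ⟨le_fst_of_seg hz ?_ ?_, fst_le_of_seg hz ?_ ?_, le_snd_of_seg hz ?_ ?_,
      snd_le_of_seg hz ?_ ?_⟩ <;>
      (simp only [hv0, hv1]; linarith only [hδ, s0a, s0b, s0c, s0d, s1a, s1b, s1c, s1d])
  have hE1 : ∀ z ∈ segment ℝ (v 1) (v 2), w.1 + δ + 3*δ/40 ≤ z.1 ∧ z.1 ≤ w.1 + δ + δ/10 ∧
      w.2 + 3*δ/40 ≤ z.2 ∧ z.2 ≤ w.2 + δ + δ/10 := by
    intro z hz
    refine ⟨le_fst_of_seg hz ?_ ?_, fst_le_of_seg hz ?_ ?_, le_snd_of_seg hz ?_ ?_,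
      snd_le_of_seg hz ?_ ?_⟩ <;>
      (simp only [hv1, hv2]; linarith only [hδ, s1a, s1b, s1c, s1d, s2a, s2b, s2c, s2d])
  have hE2 : ∀ z ∈ segment ℝ (v 2) (v 3), w.1 + 3*δ/40 ≤ z.1 ∧ z.1 ≤ w.1 + δ + δ/10 ∧
      w.2 + δ + 3*δ/40 ≤ z.2 ∧ z.2 ≤ w.2 + δ + δ/10 := by
    intro z hz
    refine ⟨le_fst_of_seg hz ?_ ?_, fst_le_of_seg hz ?_ ?_, le_snd_of_seg hz ?_ ?_,
      snd_le_of_seg hz ?_ ?_⟩ <;>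
      (simp only [hv2, hv3]; linarith only [hδ, s2a, s2b, s2c, s2d, s3a, s3b, s3c, s3d])
  have hE3 : ∀ z ∈ segment ℝ (v 3) (v 0), w.1 + 3*δ/40 ≤ z.1 ∧ z.1 ≤ w.1 + δ/10 ∧
      w.2 + 3*δ/40 ≤ z.2 ∧ z.2 ≤ w.2 + δ + δ/10 := by
    intro z hz
    refine ⟨le_fst_of_seg hz ?_ ?_, fst_le_of_seg hz ?_ ?_, le_snd_of_seg hz ?_ ?_,
      snd_le_of_seg hz ?_ ?_⟩ <;>
      (simp only [hv3, hv0]; linarith only [hδ, s3a, s3b, s3c, s3d, s0a, s0b, s0c, s0d])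
  have hF0 : ∀ z ∈ segment ℝ (vhat 0) (vhat 1), w.1 + 3*δ/80 ≤ z.1 ∧ z.1 ≤ w.1 + δ/2 + δ/20 ∧
      w.2 + 3*δ/80 ≤ z.2 ∧ z.2 ≤ w.2 + δ/20 := by
    intro z hz
    refine ⟨le_fst_of_seg hz ?_ ?_, fst_le_of_seg hz ?_ ?_, le_snd_of_seg hz ?_ ?_,
      snd_le_of_seg hz ?_ ?_⟩ <;>
      (simp only [hu0, hu1]; linarith only [hδ, t0a, t0b, t0c, t0d, t1a, t1b, t1c, t1d])
  have hF1 : ∀ z ∈ segment ℝ (vhat 1) (vhat 2), w.1 + δ/2 + 3*δ/80 ≤ z.1 ∧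
      z.1 ≤ w.1 + δ + δ/20 ∧ w.2 + 3*δ/80 ≤ z.2 ∧ z.2 ≤ w.2 + δ/20 := by
    intro z hz
    refine ⟨le_fst_of_seg hz ?_ ?_, fst_le_of_seg hz ?_ ?_, le_snd_of_seg hz ?_ ?_,
      snd_le_of_seg hz ?_ ?_⟩ <;>
      (simp only [hu1, hu2]; linarith only [hδ, t1a, t1b, t1c, t1d, t2a, t2b, t2c, t2d])
  have hF2 : ∀ z ∈ segment ℝ (vhat 2) (vhat 3), w.1 + δ + 3*δ/80 ≤ z.1 ∧
      z.1 ≤ w.1 + δ + δ/20 ∧ w.2 + 3*δ/80 ≤ z.2 ∧ z.2 ≤ w.2 + δ/2 + δ/20 := by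
    intro z hz
    refine ⟨le_fst_of_seg hz ?_ ?_, fst_le_of_seg hz ?_ ?_, le_snd_of_seg hz ?_ ?_,
      snd_le_of_seg hz ?_ ?_⟩ <;>
      (simp only [hu2, hu3]; linarith only [hδ, t2a, t2b, t2c, t2d, t3a, t3b, t3c, t3d])
  have hF3 : ∀ z ∈ segment ℝ (vhat 3) (vhat 4), w.1 + δ + 3*δ/80 ≤ z.1 ∧
      z.1 ≤ w.1 + δ + δ/20 ∧ w.2 + δ/2 + 3*δ/80 ≤ z.2 ∧ z.2 ≤ w.2 + δ + δ/20 := by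
    intro z hz
    refine ⟨le_fst_of_seg hz ?_ ?_, fst_le_of_seg hz ?_ ?_, le_snd_of_seg hz ?_ ?_,
      snd_le_of_seg hz ?_ ?_⟩ <;>
      (simp only [hu3, hu4]; linarith only [hδ, t3a, t3b, t3c, t3d, t4a, t4b, t4c, t4d])
  have hF4 : ∀ z ∈ segment ℝ (vhat 4) (vhat 5), w.1 + δ/2 + 3*δ/80 ≤ z.1 ∧
      z.1 ≤ w.1 + δ + δ/20 ∧ w.2 + δ + 3*δ/80 ≤ z.2 ∧ z.2 ≤ w.2 + δ + δ/20 := by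
    intro z hz
    refine ⟨le_fst_of_seg hz ?_ ?_, fst_le_of_seg hz ?_ ?_, le_snd_of_seg hz ?_ ?_,
      snd_le_of_seg hz ?_ ?_⟩ <;>
      (simp only [hu4, hu5]; linarith only [hδ, t4a, t4b, t4c, t4d, t5a, t5b, t5c, t5d])
  have hF5 : ∀ z ∈ segment ℝ (vhat 5) (vhat 6), w.1 + 3*δ/80 ≤ z.1 ∧
      z.1 ≤ w.1 + δ/2 + δ/20 ∧ w.2 + δ + 3*δ/80 ≤ z.2 ∧ z.2 ≤ w.2 + δ + δ/20 := by
    intro z hz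
    refine ⟨le_fst_of_seg hz ?_ ?_, fst_le_of_seg hz ?_ ?_, le_snd_of_seg hz ?_ ?_,
      snd_le_of_seg hz ?_ ?_⟩ <;>
      (simp only [hu5, hu6]; linarith only [hδ, t5a, t5b, t5c, t5d, t6a, t6b, t6c, t6d])
  have hF6 : ∀ z ∈ segment ℝ (vhat 6) (vhat 7), w.1 + 3*δ/80 ≤ z.1 ∧ z.1 ≤ w.1 + δ/20 ∧
      w.2 + δ/2 + 3*δ/80 ≤ z.2 ∧ z.2 ≤ w.2 + δ + δ/20 := by
    intro z hz
    refine ⟨le_fst_of_seg hz ?_ ?_, fst_le_of_seg hz ?_ ?_, le_snd_of_seg hz ?_ ?_,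
      snd_le_of_seg hz ?_ ?_⟩ <;>
      (simp only [hu6, hu7]; linarith only [hδ, t6a, t6b, t6c, t6d, t7a, t7b, t7c, t7d])
  have hF7 : ∀ z ∈ segment ℝ (vhat 7) (vhat 0), w.1 + 3*δ/80 ≤ z.1 ∧ z.1 ≤ w.1 + δ/20 ∧
      w.2 + 3*δ/80 ≤ z.2 ∧ z.2 ≤ w.2 + δ/2 + δ/20 := by
    intro z hz
    refine ⟨le_fst_of_seg hz ?_ ?_, fst_le_of_seg hz ?_ ?_, le_snd_of_seg hz ?_ ?_,
      snd_le_of_seg hz ?_ ?_⟩ <;>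
      (simp only [hu7, hu0]; linarith only [hδ, t7a, t7b, t7c, t7d, t0a, t0b, t0c, t0d])
  constructor
  · -- part 1: distance bound
    intro i x hx y hy
    rcases fin4_cases i with rfl | rfl | rfl | rfl
    · replace hx : x ∈ segment ℝ (v 0) (v 1) := hx
      replace hy : y ∈ segment ℝ (vhat 0) (vhat 1) ∪ segment ℝ (vhat 1) (vhat 2) := hy
      have h1 := (hE0 x hx).2.2.1
      have h2 : y.2 ≤ w.2 + δ/20 := by
        rcases hy with h | h
        · exact (hF0 y h).2.2.2
        · exact (hF1 y h).2.2.2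
      exact snd_dist (by linarith only [h1, h2, hδ])
    · replace hx : x ∈ segment ℝ (v 1) (v 2) := hx
      replace hy : y ∈ segment ℝ (vhat 2) (vhat 3) ∪ segment ℝ (vhat 3) (vhat 4) := hy
      have h1 := (hE1 x hx).1
      have h2 : y.1 ≤ w.1 + δ + δ/20 := by
        rcases hy with h | h
        · exact (hF2 y h).2.1
        · exact (hF3 y h).2.1
      exact fst_dist (by linarith only [h1, h2, hδ])
    · replace hx : x ∈ segment ℝ (v 2) (v 3) := hx
      replace hy : y ∈ segment ℝ (vhat 4) (vhat 5) ∪ segment ℝ (vhat 5) (vhat 6) := hy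
      have h1 := (hE2 x hx).2.2.1
      have h2 : y.2 ≤ w.2 + δ + δ/20 := by
        rcases hy with h | h
        · exact (hF4 y h).2.2.2
        · exact (hF5 y h).2.2.2
      exact snd_dist (by linarith only [h1, h2, hδ])
    · replace hx : x ∈ segment ℝ (v 3) (v 0) := hx
      replace hy : y ∈ segment ℝ (vhat 6) (vhat 7) ∪ segment ℝ (vhat 7) (vhat 0) := hy
      have h1 := (hE3 x hx).1
      have h2 : y.1 ≤ w.1 + δ/20 := by
        rcases hy with h | h
        · exact (hF6 y h).2.1
        · exact (hF7 y h).2.1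
      exact fst_dist (by linarith only [h1, h2, hδ])
  · -- part 2: exactly two intersection points
    obtain ⟨hcS, S, hS1, hS2⟩ :=
      key_pair (W1 := w.1) (W2 := w.2) hδ s0a s0b s0c s0d s1a s1b s1c s1d
        t2a t2b t2c t2d t3a t3b t3c t3d
    rw [← hv0, ← hv1] at hS1
    rw [← hu2, ← hu3] at hS2
    obtain ⟨hcT, T0, hT1, hT2⟩ :=
      key_pair (W1 := w.2) (W2 := w.1) hδ s0c s0d s0a s0b s3c s3d s3a s3b
        t6c t6d t6a t6b t5c t5d t5a t5b
    have hT1' := seg_swap hT1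
    have hT2' := seg_swap hT2
    rw [← hv0, ← hv3] at hT1'
    rw [← hu6, ← hu5] at hT2'
    set T : ℝ × ℝ := (T0.2, T0.1) with hTdef
    have hT1'' : T ∈ segment ℝ (v 3) (v 0) := by rw [segment_symm]; exact hT1'
    have hT2'' : T ∈ segment ℝ (vhat 5) (vhat 6) := by rw [segment_symm]; exact hT2'
    have hcS' : cross (v 1 - v 0) (vhat 3 - vhat 2) ≠ 0 := by
      rw [hv0, hv1, hu2, hu3]; exact ne_of_gt hcS
    have hcT' : cross (v 0 - v 3) (vhat 6 - vhat 5) ≠ 0 := by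
      rw [hv0, hv3, hu5, hu6]
      have heq : cross ((w.1 + (σ 0).1, w.2 + (σ 0).2) - (w.1 + (σ 3).1, w.2 + δ + (σ 3).2))
          ((w.1 + (τ 6).1, w.2 + δ + (τ 6).2) - (w.1 + δ/2 + (τ 5).1, w.2 + δ + (τ 5).2)) =
          -cross ((w.2 + δ + (σ 3).2, w.1 + (σ 3).1) - (w.2 + (σ 0).2, w.1 + (σ 0).1))
          ((w.2 + δ + (τ 5).2, w.1 + δ/2 + (τ 5).1) - (w.2 + δ + (τ 6).2, w.1 + (τ 6).1)) := by
        unfold cross; dsimp; ring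
      rw [heq]
      exact neg_ne_zero.2 (ne_of_gt hcT)
    have hSne : S ≠ T := by
      have h1 := (hE0 S hS1).2.2.2
      have h2 := (hF5 T hT2'').2.2.1
      intro h
      rw [h] at h1
      linarith
    refine ⟨S, T, hSne, ?_⟩
    ext x
    constructor
    · rintro ⟨hxE, hxF⟩
      rw [mem_iUnion] at hxE hxF
      obtain ⟨i, hi⟩ := hxE
      obtain ⟨j, hj⟩ := hxF
      rcases fin4_cases i with rfl | rfl | rfl | rfl
      · replace hi : x ∈ segment ℝ (v 0) (v 1) := hi
        obtain ⟨h1, h2, h3, h4⟩ := hE0 x hi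
        rcases fin8_cases j with rfl | rfl | rfl | rfl | rfl | rfl | rfl | rfl
        · exact absurd (hF0 x hj).2.2.2 (by linarith only [h1, h2, h3, h4, hδ])
        · exact absurd (hF1 x hj).2.2.2 (by linarith only [h1, h2, h3, h4, hδ])
        · replace hj : x ∈ segment ℝ (vhat 2) (vhat 3) := hj
          have hxS : x = S := inter_unique hcS' hi hj hS1 hS2
          rw [hxS]
          exact mem_insert _ _
        · exact absurd (hF3 x hj).2.2.1 (by linarith only [h1, h2, h3, h4, hδ])
        · exact absurd (hF4 x hj).2.2.1 (by linarith only [h1, h2, h3, h4, hδ])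
        · exact absurd (hF5 x hj).2.2.1 (by linarith only [h1, h2, h3, h4, hδ])
        · exact absurd (hF6 x hj).2.1 (by linarith only [h1, h2, h3, h4, hδ])
        · exact absurd (hF7 x hj).2.1 (by linarith only [h1, h2, h3, h4, hδ])
      · replace hi : x ∈ segment ℝ (v 1) (v 2) := hi
        have h1 := (hE1 x hi).1
        rcases fin8_cases j with rfl | rfl | rfl | rfl | rfl | rfl | rfl | rfl
        · exact absurd (hF0 x hj).2.1 (by linarith only [h1, hδ])
        · exact absurd (hF1 x hj).2.1 (by linarith only [h1, hδ])
        · exact absurd (hF2 x hj).2.1 (by linarith only [h1, hδ])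
        · exact absurd (hF3 x hj).2.1 (by linarith only [h1, hδ])
        · exact absurd (hF4 x hj).2.1 (by linarith only [h1, hδ])
        · exact absurd (hF5 x hj).2.1 (by linarith only [h1, hδ])
        · exact absurd (hF6 x hj).2.1 (by linarith only [h1, hδ])
        · exact absurd (hF7 x hj).2.1 (by linarith only [h1, hδ])
      · replace hi : x ∈ segment ℝ (v 2) (v 3) := hi
        have h1 := (hE2 x hi).2.2.1
        rcases fin8_cases j with rfl | rfl | rfl | rfl | rfl | rfl | rfl | rfl
        · exact absurd (hF0 x hj).2.2.2 (by linarith only [h1, hδ])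
        · exact absurd (hF1 x hj).2.2.2 (by linarith only [h1, hδ])
        · exact absurd (hF2 x hj).2.2.2 (by linarith only [h1, hδ])
        · exact absurd (hF3 x hj).2.2.2 (by linarith only [h1, hδ])
        · exact absurd (hF4 x hj).2.2.2 (by linarith only [h1, hδ])
        · exact absurd (hF5 x hj).2.2.2 (by linarith only [h1, hδ])
        · exact absurd (hF6 x hj).2.2.2 (by linarith only [h1, hδ])
        · exact absurd (hF7 x hj).2.2.2 (by linarith only [h1, hδ])
      · replace hi : x ∈ segment ℝ (v 3) (v 0) := hi
        obtain ⟨h1, h2, h3, h4⟩ := hE3 x hi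
        rcases fin8_cases j with rfl | rfl | rfl | rfl | rfl | rfl | rfl | rfl
        · exact absurd (hF0 x hj).2.2.2 (by linarith only [h1, h2, h3, h4, hδ])
        · exact absurd (hF1 x hj).1 (by linarith only [h1, h2, h3, h4, hδ])
        · exact absurd (hF2 x hj).1 (by linarith only [h1, h2, h3, h4, hδ])
        · exact absurd (hF3 x hj).1 (by linarith only [h1, h2, h3, h4, hδ])
        · exact absurd (hF4 x hj).1 (by linarith only [h1, h2, h3, h4, hδ])
        · replace hj : x ∈ segment ℝ (vhat 5) (vhat 6) := hj
          have hxT : x = T := inter_unique hcT' hi hj hT1'' hT2''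
          rw [hxT]
          exact mem_insert_of_mem _ (mem_singleton _)
        · exact absurd (hF6 x hj).2.1 (by linarith only [h1, h2, h3, h4, hδ])
        · exact absurd (hF7 x hj).2.1 (by linarith only [h1, h2, h3, h4, hδ])
    · intro hx
      simp only [mem_insert_iff, mem_singleton_iff] at hx
      rcases hx with rfl | rfl
      · exact ⟨mem_iUnion.2 ⟨0, hS1⟩, mem_iUnion.2 ⟨2, hS2⟩⟩
      · exact ⟨mem_iUnion.2 ⟨3, hT1''⟩, mem_iUnion.2 ⟨5, hT2''⟩⟩

end
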